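/- Let Ψ be a root datum with finite automorphism group Γ stabilizing a base. For β ∈ Φ, define Ξ_β = Γ·β if the orbit Γ·β is pairwise orthogonal; otherwise Ξ_β = {θ + θ′ : θ ∈ Γ·β}, where θ′ is the unique root in Γ·β distinct from and not orthogonal to θ. For α = i*(β) ∈ Φ̄, set α^∨ = (|Γ·β|/|Ξ_β|) Σ_{ξ∈Ξ_β} ξ^∨ ∈ X̄_* := X_*^Γ. Then ⟨ι(α), i_*(α^∨)⟩ = 2, where ι : X̄* ⊗ Q → (X* ⊗ Q)^Γ is the averaging section and i_* : X_*^Γ → X_* the inclusion. -/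

import Mathlib

open scoped BigOperators Classical

instance AddAut.groupOfOldMathlib (M : Type*) [Add M] : Group (AddAut M) where
  mul g h := AddEquiv.trans h g
  one := AddEquiv.refl _
  inv := AddEquiv.symm
  mul_assoc _ _ _ := rfl
  one_mul _ := rfl
  mul_one _ := rfl
  inv_mul_cancel := AddEquiv.self_trans_symm

theorem addAut_mul_apply_old {M : Type*} [Add M] (g h : AddAut M) (x : M) :
    (g * h) x = g (h x) := rfl

/-- A (not necessarily reduced) root datum `Ψ = (X*, Φ, X_*, Φ^∨)`:
dual lattices `X`, `Y` in perfect duality, a finite set of roots, and a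
coroot map satisfying the usual axioms. -/
structure ZRootDatum (X Y : Type) [AddCommGroup X] [AddCommGroup Y] : Type where
  pair : X →+ Y →+ ℤ
  perfect : Function.Bijective fun x : X => pair x
  perfect' : Function.Bijective fun y : Y => pair.flip y
  roots : Finset X
  coroot : X → Y
  pair_self : ∀ β ∈ roots, pair β (coroot β) = 2
  reflect_mem : ∀ β ∈ roots, ∀ x ∈ roots, x - pair x (coroot β) • β ∈ roots
  coreflect_mem : ∀ β ∈ roots, ∀ β' ∈ roots,
    ∃ β'' ∈ roots, coroot β' - pair β (coroot β') • coroot β = coroot β''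

variable {X Y Γ : Type} [AddCommGroup X] [AddCommGroup Y] [Group Γ]

/-- The Weyl group of a root datum: the subgroup of `Aut(X)` generated by the
reflections `w_β : x ↦ x - ⟨x, β^∨⟩β` through the roots. -/
def ZRootDatum.weylGroup (Ψ : ZRootDatum X Y) : Subgroup (AddAut X) :=
  Subgroup.closure {w : AddAut X | ∃ β ∈ Ψ.roots, ∀ x, w x = x - Ψ.pair x (Ψ.coroot β) • β}

/-- `Δ` is a base (system of simple roots) of the root datum. -/
def ZRootDatum.IsBase (Ψ : ZRootDatum X Y) (Δ : Finset X) : Prop :=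
  (↑Δ : Set X) ⊆ ↑Ψ.roots ∧
  LinearIndependent ℤ (fun a : ↥(↑Δ : Set X) => (a : X)) ∧
  ∀ β ∈ Ψ.roots, ∃ c : X → ℤ,
    β = ∑ a ∈ Δ, c a • a ∧ ((∀ a ∈ Δ, 0 ≤ c a) ∨ (∀ a ∈ Δ, c a ≤ 0))

/-- A group `Γ` acting (via `ρ` on `X*` and `ρ'` on `X_*`) by automorphisms of
the root datum `Ψ`. -/
structure RDAction (Ψ : ZRootDatum X Y) (ρ : Γ →* AddAut X) (ρ' : Γ →* AddAut Y) : Prop where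
  pair_eq : ∀ γ x y, Ψ.pair (ρ γ x) (ρ' γ y) = Ψ.pair x y
  root_mem : ∀ γ, ∀ β ∈ Ψ.roots, ρ γ β ∈ Ψ.roots
  coroot_eq : ∀ γ, ∀ β ∈ Ψ.roots, Ψ.coroot (ρ γ β) = ρ' γ (Ψ.coroot β)

/-- The norm map `N : x ↦ ∑_{γ ∈ Γ} γ·x`.  For a free lattice `X`, its kernel
is exactly the kernel of the projection of `X` onto the coinvariants `X_Γ`
modulo torsion. -/
noncomputable def normMap [Fintype Γ] (ρ : Γ →* AddAut X) : X →+ X :=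
  ∑ γ : Γ, ((ρ γ : X ≃+ X) : X →+ X)

/-- The projection `i* : X* → X̄*` onto the coinvariant lattice modulo torsion. -/
noncomputable def istar [Fintype Γ] (ρ : Γ →* AddAut X) : X →+ X ⧸ (normMap ρ).ker :=
  QuotientAddGroup.mk' (normMap ρ).ker


/-- The `Γ`-orbit of `β`. -/
noncomputable def orb [Fintype Γ] (ρ : Γ →* AddAut X) (β : X) : Finset X :=
  Finset.image (fun γ : Γ => ρ γ β) Finset.univ

/-- A set of roots is (pairwise) orthogonal if distinct members pair to `0`
with each other's coroots. -/
def IsOrthogonalSet (Ψ : ZRootDatum X Y) (S : Finset X) : Prop :=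
  ∀ θ ∈ S, ∀ θ' ∈ S, θ ≠ θ' → Ψ.pair θ (Ψ.coroot θ') = 0

/-- The (unique, when it exists) root in the orbit of `β` distinct from and not
orthogonal to `θ`. -/
noncomputable def partner [Fintype Γ] (Ψ : ZRootDatum X Y) (ρ : Γ →* AddAut X) (β θ : X) : X :=
  if h : ∃ θ', θ' ∈ orb ρ β ∧ θ' ≠ θ ∧ Ψ.pair θ (Ψ.coroot θ') ≠ 0 then h.choose else 0

/-- The orthogonal `Γ`-orbit `Ξ_β` attached to `β`:  `Γ·β` itself if that orbit
is orthogonal, and `{θ + θ' : θ ∈ Γ·β}` otherwise. -/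
noncomputable def Xi [Fintype Γ] (Ψ : ZRootDatum X Y) (ρ : Γ →* AddAut X) (β : X) : Finset X :=
  if IsOrthogonalSet Ψ (orb ρ β) then orb ρ β
  else (orb ρ β).image fun θ => θ + partner Ψ ρ β θ

/-- The restricted coroot `α^∨ = (|Γ·β|/|Ξ_β|) ∑_{ξ ∈ Ξ_β} ξ^∨` attached to
`α = i*(β)`. -/
noncomputable def restCoroot [Fintype Γ] (Ψ : ZRootDatum X Y) (ρ : Γ →* AddAut X) (β : X) : Y :=
  (((orb ρ β).card / (Xi Ψ ρ β).card : ℕ) : ℤ) • ∑ ξ ∈ Xi Ψ ρ β, Ψ.coroot ξ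


namespace RCAux
open Finset

variable {X Y Γ : Type} [AddCommGroup X] [AddCommGroup Y] [Group Γ]

variable (Ψ : ZRootDatum X Y)

/-- The set of coroots. -/
noncomputable def CR : Finset Y := Ψ.roots.image Ψ.coroot

lemma coroot_mem_CR {b : X} (hb : b ∈ Ψ.roots) : Ψ.coroot b ∈ CR Ψ :=
  Finset.mem_image_of_mem _ hb

/-- The auxiliary invariant symmetric form. -/
noncomputable def BB (x y : X) : ℤ := ∑ v ∈ CR Ψ, Ψ.pair x v * Ψ.pair y v

lemma BB_comm (x y : X) : BB Ψ x y = BB Ψ y x :=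
  Finset.sum_congr rfl fun v _ => mul_comm _ _

lemma BB_add_left (x x' y : X) : BB Ψ (x + x') y = BB Ψ x y + BB Ψ x' y := by
  unfold BB
  rw [← Finset.sum_add_distrib]
  exact Finset.sum_congr rfl fun v _ => by
    rw [map_add, AddMonoidHom.add_apply, add_mul]

lemma BB_add_right (x y y' : X) : BB Ψ x (y + y') = BB Ψ x y + BB Ψ x y' := by
  rw [BB_comm, BB_add_left, BB_comm Ψ y x, BB_comm Ψ y' x]

lemma BB_zsmul_left (n : ℤ) (x y : X) : BB Ψ (n • x) y = n * BB Ψ x y := by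
  unfold BB
  rw [Finset.mul_sum]
  exact Finset.sum_congr rfl fun v _ => by
    rw [map_zsmul, AddMonoidHom.smul_apply, smul_eq_mul, mul_assoc]

lemma BB_zsmul_right (n : ℤ) (x y : X) : BB Ψ x (n • y) = n * BB Ψ x y := by
  rw [BB_comm, BB_zsmul_left, BB_comm]

lemma BB_neg_right (x y : X) : BB Ψ x (-y) = - BB Ψ x y := by
  have := BB_zsmul_right Ψ (-1) x y
  simpa using this

lemma BB_sub_left (x x' y : X) : BB Ψ (x - x') y = BB Ψ x y - BB Ψ x' y := by
  have h := BB_add_left Ψ (x - x') x' y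
  have : x - x' + x' = x := sub_add_cancel x x'
  rw [this] at h
  omega

lemma BB_pos {b : X} (hb : b ∈ Ψ.roots) : 0 < BB Ψ b b := by
  have h4 : (4 : ℤ) ≤ BB Ψ b b := by
    have : (Ψ.pair b (Ψ.coroot b)) * (Ψ.pair b (Ψ.coroot b)) = 4 := by
      rw [Ψ.pair_self b hb]; norm_num
    calc (4:ℤ) = Ψ.pair b (Ψ.coroot b) * Ψ.pair b (Ψ.coroot b) := this.symm
    _ ≤ BB Ψ b b := Finset.single_le_sum (f := fun v => Ψ.pair b v * Ψ.pair b v)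
        (fun v _ => mul_self_nonneg _) (coroot_mem_CR Ψ hb)
  omega

/-- Cauchy–Schwarz for `BB`. -/
lemma BB_cs (x y : X) : BB Ψ x y ^ 2 ≤ BB Ψ x x * BB Ψ y y := by
  have h := Finset.sum_mul_sq_le_sq_mul_sq (CR Ψ) (fun v => Ψ.pair x v) (fun v => Ψ.pair y v)
  have e1 : BB Ψ x x = ∑ v ∈ CR Ψ, (Ψ.pair x v)^2 :=
    Finset.sum_congr rfl fun v _ => (sq _).symm
  have e2 : BB Ψ y y = ∑ v ∈ CR Ψ, (Ψ.pair y v)^2 :=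
    Finset.sum_congr rfl fun v _ => (sq _).symm
  rw [e1, e2]
  exact h

/-- `BB` is invariant under the reflection in a root. -/
lemma BB_reflect {b : X} (hb : b ∈ Ψ.roots) (x y : X) :
    BB Ψ (x - Ψ.pair x (Ψ.coroot b) • b) (y - Ψ.pair y (Ψ.coroot b) • b) = BB Ψ x y := by
  classical
  set c := Ψ.coroot b with hc
  have hbc : Ψ.pair b c = 2 := Ψ.pair_self b hb
  set T : Y → Y := fun v => v - Ψ.pair b v • c with hT
  have hTmem : ∀ v ∈ CR Ψ, T v ∈ CR Ψ := by
    intro v hv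
    rcases Finset.mem_image.1 hv with ⟨b', hb', rfl⟩
    rcases Ψ.coreflect_mem b hb b' hb' with ⟨b'', hb'', he⟩
    rw [hT]
    simp only []
    rw [he]
    exact coroot_mem_CR Ψ hb''
  have hTT : ∀ v, T (T v) = v := by
    intro v
    have hpb : Ψ.pair b (T v) = - Ψ.pair b v := by
      simp only [hT, map_sub, map_zsmul, smul_eq_mul, hbc]; ring
    calc T (T v) = T v - Ψ.pair b (T v) • c := rfl
    _ = (v - Ψ.pair b v • c) + Ψ.pair b v • c := by rw [hpb, neg_smul, sub_neg_eq_add]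
    _ = v := by abel
  have hkey : ∀ z v, Ψ.pair (z - Ψ.pair z c • b) v = Ψ.pair z (T v) := by
    intro z v
    simp only [hT, map_sub, map_zsmul, AddMonoidHom.sub_apply, AddMonoidHom.smul_apply,
      smul_eq_mul]
    ring
  unfold BB
  rw [Finset.sum_nbij' (i := fun v => T v) (j := fun v => T v) (hi := hTmem)
    (hj := hTmem) (left_neg := fun v _ => hTT v) (right_neg := fun v _ => hTT v)]
  intro v hv
  rw [hkey x v, hkey y v]

/-- key identity: `2 B(x, b) = ⟨x, b^∨⟩ B(b, b)` for a root `b`. -/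
lemma BB_pairing {b : X} (hb : b ∈ Ψ.roots) (x : X) :
    2 * BB Ψ x b = Ψ.pair x (Ψ.coroot b) * BB Ψ b b := by
  have hbb : b - Ψ.pair b (Ψ.coroot b) • b = -b := by
    rw [Ψ.pair_self b hb]; rw [two_smul]; abel
  have h := BB_reflect Ψ hb x b
  rw [hbb, BB_sub_left, BB_zsmul_left, BB_neg_right, BB_neg_right] at h
  linarith [h]


lemma pair_symm_of_norm_eq {ξ η : X} (hξ : ξ ∈ Ψ.roots) (hη : η ∈ Ψ.roots)
    (hn : BB Ψ ξ ξ = BB Ψ η η) : Ψ.pair ξ (Ψ.coroot η) = Ψ.pair η (Ψ.coroot ξ) := by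
  have h1 := BB_pairing Ψ hη ξ
  have h2 := BB_pairing Ψ hξ η
  have hc : BB Ψ ξ η = BB Ψ η ξ := BB_comm Ψ ξ η
  have hpos := BB_pos Ψ hη
  have key : Ψ.pair ξ (Ψ.coroot η) * BB Ψ η η = Ψ.pair η (Ψ.coroot ξ) * BB Ψ η η := by
    rw [← h1, ← hn, ← h2, hc]
  exact mul_right_cancel₀ (ne_of_gt hpos) key

lemma pair_sq_le_four {ξ η : X} (hξ : ξ ∈ Ψ.roots) (hη : η ∈ Ψ.roots)
    (hn : BB Ψ ξ ξ = BB Ψ η η) : Ψ.pair ξ (Ψ.coroot η) ^ 2 ≤ 4 := by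
  have h1 := BB_pairing Ψ hη ξ
  have hcs := BB_cs Ψ ξ η
  have hpos := BB_pos Ψ hη
  have hsq : (Ψ.pair ξ (Ψ.coroot η)) ^ 2 * (BB Ψ η η * BB Ψ η η) = 4 * (BB Ψ ξ η) ^ 2 := by
    calc (Ψ.pair ξ (Ψ.coroot η)) ^ 2 * (BB Ψ η η * BB Ψ η η)
        = (Ψ.pair ξ (Ψ.coroot η) * BB Ψ η η) ^ 2 := by ring
    _ = (2 * BB Ψ ξ η) ^ 2 := by rw [h1]
    _ = 4 * (BB Ψ ξ η) ^ 2 := by ring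
  rw [hn] at hcs
  nlinarith [mul_pos hpos hpos]

variable [Module.Free ℤ X]

/-- There are no two roots pairing to `±2` with each other (other than `∓` each
other): this would produce infinitely many roots. -/
lemma no_double_bond {ξ η : X} (hξ : ξ ∈ Ψ.roots) (hη : η ∈ Ψ.roots) (ε : ℤ)
    (hε : ε = 1 ∨ ε = -1)
    (h1 : Ψ.pair ξ (Ψ.coroot η) = 2 * ε) (h2 : Ψ.pair η (Ψ.coroot ξ) = 2 * ε)
    (hd : ξ - ε • η ≠ 0) : False := by
  set d := ξ - ε • η with hdd
  have hε2 : ε * ε = 1 := by rcases hε with rfl | rfl <;> norm_num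
  have hdξ : Ψ.pair d (Ψ.coroot ξ) = 0 := by
    rw [hdd]
    simp only [map_sub, map_zsmul, AddMonoidHom.sub_apply, AddMonoidHom.smul_apply,
      smul_eq_mul, Ψ.pair_self ξ hξ, h2]
    nlinarith [hε2]
  have hdη : Ψ.pair d (Ψ.coroot η) = 0 := by
    rw [hdd]
    simp only [map_sub, map_zsmul, AddMonoidHom.sub_apply, AddMonoidHom.smul_apply,
      smul_eq_mul, Ψ.pair_self η hη, h1]
    ring
  have chain : ∀ n : ℕ, ξ - ((2 * n : ℤ)) • d ∈ Ψ.roots := by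
    intro n
    induction n with
    | zero => simpa using hξ
    | succ n ih =>
      set r := ξ - ((2 * (n : ℤ))) • d with hr
      have hrξ : Ψ.pair r (Ψ.coroot ξ) = 2 := by
        rw [hr]
        simp only [map_sub, map_zsmul, AddMonoidHom.sub_apply, AddMonoidHom.smul_apply,
          smul_eq_mul, Ψ.pair_self ξ hξ, hdξ]
        ring
      have s1 := Ψ.reflect_mem ξ hξ r ih
      rw [hrξ] at s1
      have hpe : Ψ.pair (r - (2 : ℤ) • ξ) (Ψ.coroot η) = -(2 * ε) := by
        simp only [hr, map_sub, map_zsmul, AddMonoidHom.sub_apply, AddMonoidHom.smul_apply,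
          smul_eq_mul, h1, hdη]
        ring
      have s2 := Ψ.reflect_mem η hη _ s1
      rw [hpe] at s2
      have e : r - (2 : ℤ) • ξ - (-(2 * ε)) • η = ξ - ((2 * ((n : ℤ) + 1))) • d := by
        rw [hr, hdd]
        module
      rw [e] at s2
      have : ((2 : ℤ) * ((n : ℕ) + 1 : ℕ)) = (2 * ((n : ℤ) + 1)) := by push_cast; ring
      rw [this]
      exact s2
  have hinj : Function.Injective (fun n : ℕ => ξ - ((2 * n : ℤ)) • d) := by
    intro m n h
    simp only [sub_right_inj] at h
    have := smul_left_injective ℤ hd h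
    omega
  exact (Ψ.roots.finite_toSet).not_infinite
    (Set.infinite_of_injective_forall_mem hinj
      (fun n => Finset.mem_coe.2 (chain n)))

lemma no_triangle {θ θ' θ'' : X} (h1 : θ ∈ Ψ.roots) (h2 : θ' ∈ Ψ.roots) (h3 : θ'' ∈ Ψ.roots)
    (hn1 : BB Ψ θ θ = BB Ψ θ' θ') (hn2 : BB Ψ θ θ = BB Ψ θ'' θ'')
    (p1 : Ψ.pair θ (Ψ.coroot θ') = -1) (p2 : Ψ.pair θ (Ψ.coroot θ'') = -1)
    (p3 : Ψ.pair θ' (Ψ.coroot θ'') = -1)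
    (hd : θ + θ' + θ'' ≠ 0) : False := by
  have hξmem : θ + θ' ∈ Ψ.roots := by
    have := Ψ.reflect_mem θ' h2 θ h1
    rw [p1] at this
    simpa [sub_neg_eq_add] using this
  have hbb' : 2 * BB Ψ θ θ' = (-1) * BB Ψ θ' θ' := by
    rw [← p1]; exact BB_pairing Ψ h2 θ
  have hnξ : BB Ψ (θ + θ') (θ + θ') = BB Ψ θ'' θ'' := by
    rw [BB_add_left, BB_add_right, BB_add_right]
    have hc : BB Ψ θ' θ = BB Ψ θ θ' := BB_comm Ψ θ' θ
    linarith
  have hpξ : Ψ.pair (θ + θ') (Ψ.coroot θ'') = 2 * (-1) := by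
    rw [map_add, AddMonoidHom.add_apply, p2, p3]; ring
  have hpξ' : Ψ.pair θ'' (Ψ.coroot (θ + θ')) = 2 * (-1) := by
    rw [← pair_symm_of_norm_eq Ψ hξmem h3 hnξ]; exact hpξ
  refine no_double_bond Ψ hξmem h3 (-1) (Or.inr rfl) hpξ hpξ' ?_
  intro hcon
  apply hd
  have : θ + θ' + θ'' = θ + θ' - (-1 : ℤ) • θ'' := by
    rw [neg_smul, one_smul, sub_neg_eq_add]
  rw [this, hcon]


/-- No finite nonempty set of equal-norm roots pairing in `{0,-1}`, with
"minimal degree at least two" and no vanishing subset sums, exists. -/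
lemma no_two_regular (b : ℤ) : ∀ (n : ℕ) (R : Finset X), R.card ≤ n → R.Nonempty →
    (∀ θ ∈ R, θ ∈ Ψ.roots) →
    (∀ θ ∈ R, BB Ψ θ θ = b) →
    (∀ θ ∈ R, ∀ η ∈ R, θ ≠ η → Ψ.pair θ (Ψ.coroot η) = 0 ∨ Ψ.pair θ (Ψ.coroot η) = -1) →
    (∀ θ ∈ R, ∃ η, η ∈ R ∧ ∃ η', η' ∈ R ∧ η ≠ η' ∧ η ≠ θ ∧ η' ≠ θ ∧
        Ψ.pair θ (Ψ.coroot η) = -1 ∧ Ψ.pair θ (Ψ.coroot η') = -1) →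
    (∀ S ⊆ R, S.Nonempty → ∑ x ∈ S, x ≠ 0) → False := by
  intro n
  induction n with
  | zero =>
    intro R hcard hne _ _ _ _ _
    have := Finset.card_pos.2 hne
    omega
  | succ n ih =>
    intro R hcard hne hroots hnorm hpairs hdeg hsum
    classical
    have hsym : ∀ x ∈ R, ∀ y ∈ R, Ψ.pair x (Ψ.coroot y) = Ψ.pair y (Ψ.coroot x) := by
      intro x hx y hy
      exact pair_symm_of_norm_eq Ψ (hroots x hx) (hroots y hy)
        (by rw [hnorm x hx, hnorm y hy])
    have htri : ∀ x ∈ R, ∀ y ∈ R, ∀ z ∈ R, x ≠ y → x ≠ z → y ≠ z →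
        Ψ.pair x (Ψ.coroot y) = -1 → Ψ.pair x (Ψ.coroot z) = -1 →
        Ψ.pair y (Ψ.coroot z) = -1 → False := by
      intro x hx y hy z hz hxy hxz hyz p1 p2 p3
      refine no_triangle Ψ (hroots x hx) (hroots y hy) (hroots z hz)
        (by rw [hnorm x hx, hnorm y hy]) (by rw [hnorm x hx, hnorm z hz]) p1 p2 p3 ?_
      have hS : ({x, y, z} : Finset X) ⊆ R := by
        intro w hw
        simp only [Finset.mem_insert, Finset.mem_singleton] at hw
        rcases hw with rfl | rfl | rfl <;> assumption
      have := hsum {x, y, z} hS ⟨x, by simp⟩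
      rwa [Finset.sum_insert (by simp [hxy, hxz]), Finset.sum_insert (by simp [hyz]),
        Finset.sum_singleton, ← add_assoc] at this
    obtain ⟨θ, hθ⟩ := hne
    obtain ⟨θ', hθ'R, A, hAR, hθ'A, hθ'θ, hAθ, pθθ', pθA⟩ := hdeg θ hθ
    have hcommon : ∀ w ∈ R, w ≠ θ → w ≠ θ' →
        ¬ (Ψ.pair θ (Ψ.coroot w) = -1 ∧ Ψ.pair θ' (Ψ.coroot w) = -1) := by
      rintro w hw hwθ hwθ' ⟨q1, q2⟩
      exact htri θ hθ θ' hθ'R w hw (Ne.symm hθ'θ) (Ne.symm hwθ) (Ne.symm hwθ') pθθ' q1 q2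
    set ξ := θ + θ' with hξ
    have hξroot : ξ ∈ Ψ.roots := by
      have := Ψ.reflect_mem θ' (hroots θ' hθ'R) θ (hroots θ hθ)
      rw [pθθ'] at this
      simpa [hξ, sub_neg_eq_add] using this
    have hbb : 2 * BB Ψ θ θ' = -b := by
      have := BB_pairing Ψ (hroots θ' hθ'R) θ
      rw [pθθ', hnorm θ' hθ'R] at this
      linarith
    have hξnorm : BB Ψ ξ ξ = b := by
      rw [hξ, BB_add_left, BB_add_right, BB_add_right]
      have h1 := hnorm θ hθ
      have h2 := hnorm θ' hθ'R
      have hc : BB Ψ θ' θ = BB Ψ θ θ' := BB_comm Ψ θ' θ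
      linarith
    have hξw : ∀ w : X,
        Ψ.pair ξ (Ψ.coroot w) = Ψ.pair θ (Ψ.coroot w) + Ψ.pair θ' (Ψ.coroot w) := by
      intro w
      rw [hξ, map_add, AddMonoidHom.add_apply]
    have hξne : ∀ w, w ∈ R → w ≠ θ → w ≠ θ' → ξ ≠ w := by
      intro w hw hwθ hwθ' hEq
      have h2 : Ψ.pair ξ (Ψ.coroot w) = 2 := by rw [hEq]; exact Ψ.pair_self w (hroots w hw)
      rw [hξw w] at h2
      rcases hpairs θ hθ w hw (fun h => hwθ h.symm) with h | h <;>
        rcases hpairs θ' hθ'R w hw (fun h => hwθ' h.symm) with h' | h' <;> omega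
    have hξvals : ∀ w, w ∈ R → w ≠ θ → w ≠ θ' →
        Ψ.pair ξ (Ψ.coroot w) = 0 ∨ Ψ.pair ξ (Ψ.coroot w) = -1 := by
      intro w hw hwθ hwθ'
      have hnc := hcommon w hw hwθ hwθ'
      rw [hξw w]
      rcases hpairs θ hθ w hw (fun h => hwθ h.symm) with h | h <;>
        rcases hpairs θ' hθ'R w hw (fun h => hwθ' h.symm) with h' | h' <;>
        first
          | (left; omega)
          | (right; omega)
          | (exact absurd ⟨h, h'⟩ hnc)
    have hsymξ : ∀ w, w ∈ R → Ψ.pair w (Ψ.coroot ξ) = Ψ.pair ξ (Ψ.coroot w) := by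
      intro w hw
      exact pair_symm_of_norm_eq Ψ (hroots w hw) hξroot (by rw [hnorm w hw, hξnorm])
    obtain ⟨μ, hμR, μ', hμ'R, hμμ', hμθ', hμ'θ', pθ'μ, pθ'μ'⟩ := hdeg θ' hθ'R
    obtain ⟨Bv, hBvR, hBvθ, hBvθ', pθ'B⟩ :
        ∃ B, B ∈ R ∧ B ≠ θ ∧ B ≠ θ' ∧ Ψ.pair θ' (Ψ.coroot B) = -1 := by
      by_cases h : μ = θ
      · exact ⟨μ', hμ'R, fun hh => hμμ' (h.trans hh.symm), hμ'θ', pθ'μ'⟩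
      · exact ⟨μ, hμR, h, hμθ', pθ'μ⟩
    have hAθ' : A ≠ θ' := fun h => hθ'A h.symm
    have pθ'A0 : Ψ.pair θ' (Ψ.coroot A) = 0 := by
      rcases hpairs θ' hθ'R A hAR (Ne.symm hAθ') with h | h
      · exact h
      · exact absurd ⟨pθA, h⟩ (hcommon A hAR hAθ hAθ')
    have pθB0 : Ψ.pair θ (Ψ.coroot Bv) = 0 := by
      rcases hpairs θ hθ Bv hBvR (fun h => hBvθ h.symm) with h | h
      · exact h
      · exact absurd ⟨h, pθ'B⟩ (hcommon Bv hBvR hBvθ hBvθ')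
    have hABne : A ≠ Bv := by
      intro h
      exact hcommon A hAR hAθ hAθ' ⟨pθA, by rw [h]; exact pθ'B⟩
    have pξA : Ψ.pair ξ (Ψ.coroot A) = -1 := by rw [hξw A, pθA, pθ'A0]; norm_num
    have pξB : Ψ.pair ξ (Ψ.coroot Bv) = -1 := by rw [hξw Bv, pθB0, pθ'B]; norm_num
    set E := (R.erase θ).erase θ' with hE
    have hEmem : ∀ w, w ∈ E ↔ w ∈ R ∧ w ≠ θ ∧ w ≠ θ' := by
      intro w
      simp only [hE, Finset.mem_erase]
      tauto
    have hξnotE : ξ ∉ E := by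
      intro h
      rw [hEmem] at h
      exact hξne ξ h.1 h.2.1 h.2.2 rfl
    set R' := insert ξ E with hR'
    have hmem' : ∀ w ∈ R', w = ξ ∨ (w ∈ R ∧ w ≠ θ ∧ w ≠ θ') := by
      intro w hw
      rcases Finset.mem_insert.1 hw with h | h
      · exact Or.inl h
      · exact Or.inr ((hEmem w).1 h)
    have hEsub : E ⊆ R := fun w hw => ((hEmem w).1 hw).1
    have hEmem' : ∀ v, v ∈ R → v ≠ θ → v ≠ θ' → v ∈ R' :=
      fun v h1 h2 h3 => Finset.mem_insert_of_mem ((hEmem v).2 ⟨h1, h2, h3⟩)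
    have hcard' : R'.card ≤ n := by
      have h1 : θ' ∈ R.erase θ := Finset.mem_erase.2 ⟨hθ'θ, hθ'R⟩
      have h2 : (R.erase θ).card = R.card - 1 := Finset.card_erase_of_mem hθ
      have h3 : E.card = (R.erase θ).card - 1 := Finset.card_erase_of_mem h1
      have h4 : R'.card = E.card + 1 := Finset.card_insert_of_notMem hξnotE
      have h5 : 0 < (R.erase θ).card := Finset.card_pos.2 ⟨θ', h1⟩
      omega
    have hroots' : ∀ w ∈ R', w ∈ Ψ.roots := by
      intro w hw
      rcases hmem' w hw with rfl | ⟨h, _, _⟩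
      · exact hξroot
      · exact hroots w h
    have hnorm' : ∀ w ∈ R', BB Ψ w w = b := by
      intro w hw
      rcases hmem' w hw with rfl | ⟨h, _, _⟩
      · exact hξnorm
      · exact hnorm w h
    have hpairs' : ∀ x ∈ R', ∀ y ∈ R', x ≠ y →
        Ψ.pair x (Ψ.coroot y) = 0 ∨ Ψ.pair x (Ψ.coroot y) = -1 := by
      intro x hx y hy hxy
      rcases hmem' x hx with rfl | ⟨hxR, hxθ, hxθ'⟩
      · rcases hmem' y hy with rfl | ⟨hyR, hyθ, hyθ'⟩
        · exact absurd rfl hxy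
        · exact hξvals y hyR hyθ hyθ'
      · rcases hmem' y hy with rfl | ⟨hyR, hyθ, hyθ'⟩
        · rw [hsymξ x hxR]
          exact hξvals x hxR hxθ hxθ'
        · exact hpairs x hxR y hyR hxy
    have hdeg' : ∀ w ∈ R', ∃ η, η ∈ R' ∧ ∃ η', η' ∈ R' ∧ η ≠ η' ∧ η ≠ w ∧ η' ≠ w ∧
        Ψ.pair w (Ψ.coroot η) = -1 ∧ Ψ.pair w (Ψ.coroot η') = -1 := by
      intro w hw
      rcases hmem' w hw with rfl | ⟨hwR, hwθ, hwθ'⟩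
      · exact ⟨A, hEmem' A hAR hAθ hAθ', Bv, hEmem' Bv hBvR hBvθ hBvθ', hABne,
          Ne.symm (hξne A hAR hAθ hAθ'), Ne.symm (hξne Bv hBvR hBvθ hBvθ'), pξA, pξB⟩
      · obtain ⟨η, hηR, η', hη'R, hηη', hηw, hη'w, p1, p2⟩ := hdeg w hwR
        have hwξ : Ψ.pair w (Ψ.coroot θ) = -1 ∨ Ψ.pair w (Ψ.coroot θ') = -1 →
            Ψ.pair w (Ψ.coroot ξ) = -1 := by
          intro hor
          have hflip : Ψ.pair w (Ψ.coroot ξ) =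
              Ψ.pair w (Ψ.coroot θ) + Ψ.pair w (Ψ.coroot θ') := by
            rw [hsymξ w hwR, hξw w, hsym θ hθ w hwR, hsym θ' hθ'R w hwR]
          have hnotboth : ¬ (Ψ.pair w (Ψ.coroot θ) = -1 ∧
              Ψ.pair w (Ψ.coroot θ') = -1) := by
            rintro ⟨q1, q2⟩
            exact hcommon w hwR hwθ hwθ'
              ⟨by rw [hsym θ hθ w hwR]; exact q1, by rw [hsym θ' hθ'R w hwR]; exact q2⟩
          rcases hpairs w hwR θ hθ hwθ with h | h <;>
            rcases hpairs w hwR θ' hθ'R hwθ' with h' | h' <;>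
            first
              | omega
              | (exact absurd ⟨h, h'⟩ hnotboth)
        have hwξne : ξ ≠ w := hξne w hwR hwθ hwθ'
        by_cases hη : η = θ ∨ η = θ'
        · by_cases hη' : η' = θ ∨ η' = θ'
          · exfalso
            have hq : Ψ.pair w (Ψ.coroot θ) = -1 ∧ Ψ.pair w (Ψ.coroot θ') = -1 := by
              rcases hη with hEq | hEq <;> rcases hη' with hEq' | hEq'
              · exact absurd (hEq.trans hEq'.symm) hηη'
              · exact ⟨hEq ▸ p1, hEq' ▸ p2⟩
              · exact ⟨hEq' ▸ p2, hEq ▸ p1⟩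
              · exact absurd (hEq.trans hEq'.symm) hηη'
            exact hcommon w hwR hwθ hwθ'
              ⟨by rw [hsym θ hθ w hwR]; exact hq.1, by rw [hsym θ' hθ'R w hwR]; exact hq.2⟩
          · push_neg at hη'
            refine ⟨ξ, Finset.mem_insert_self _ _, η', hEmem' η' hη'R hη'.1 hη'.2,
              hξne η' hη'R hη'.1 hη'.2, hwξne, hη'w, ?_, p2⟩
            refine hwξ ?_
            rcases hη with hEq | hEq
            · exact Or.inl (hEq ▸ p1)
            · exact Or.inr (hEq ▸ p1)
        · push_neg at hη
          by_cases hη' : η' = θ ∨ η' = θ'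
          · refine ⟨ξ, Finset.mem_insert_self _ _, η, hEmem' η hηR hη.1 hη.2,
              hξne η hηR hη.1 hη.2, hwξne, hηw, ?_, p1⟩
            refine hwξ ?_
            rcases hη' with hEq | hEq
            · exact Or.inl (hEq ▸ p2)
            · exact Or.inr (hEq ▸ p2)
          · push_neg at hη'
            exact ⟨η, hEmem' η hηR hη.1 hη.2, η', hEmem' η' hη'R hη'.1 hη'.2,
              hηη', hηw, hη'w, p1, p2⟩
    have hsum' : ∀ S ⊆ R', S.Nonempty → ∑ x ∈ S, x ≠ 0 := by
      intro S hS hSne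
      by_cases hxi : ξ ∈ S
      · have hsub2 : S.erase ξ ⊆ E := by
          intro w hw
          rcases Finset.mem_insert.1 (hS (Finset.mem_of_mem_erase hw)) with h | h
          · exact absurd h (Finset.ne_of_mem_erase hw)
          · exact h
        have hθnot : θ ∉ insert θ' (S.erase ξ) := by
          intro h
          rcases Finset.mem_insert.1 h with h | h
          · exact hθ'θ h.symm
          · exact ((hEmem θ).1 (hsub2 h)).2.1 rfl
        have hθ'not : θ' ∉ S.erase ξ := fun h => ((hEmem θ').1 (hsub2 h)).2.2 rfl
        have hSsub : insert θ (insert θ' (S.erase ξ)) ⊆ R := by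
          intro w hw
          rcases Finset.mem_insert.1 hw with rfl | hw
          · exact hθ
          rcases Finset.mem_insert.1 hw with rfl | hw
          · exact hθ'R
          · exact hEsub (hsub2 hw)
        have hval := hsum _ hSsub ⟨θ, Finset.mem_insert_self _ _⟩
        rw [Finset.sum_insert hθnot, Finset.sum_insert hθ'not] at hval
        intro h0
        apply hval
        have hsplit : ξ + ∑ x ∈ S.erase ξ, x = ∑ x ∈ S, x :=
          Finset.add_sum_erase S (fun x => x) hxi
        have hz : ξ + ∑ x ∈ S.erase ξ, x = 0 := hsplit.trans h0
        rw [hξ, add_assoc] at hz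
        exact hz
      · refine hsum S (fun w hw => ?_) hSne
        rcases Finset.mem_insert.1 (hS hw) with h | h
        · exact absurd (h ▸ hw) hxi
        · exact hEsub h
    exact ih R' hcard' ⟨ξ, Finset.mem_insert_self _ _⟩ hroots' hnorm' hpairs' hdeg' hsum'

lemma root_ne_zero {η : X} (hη : η ∈ Ψ.roots) : η ≠ 0 := by
  intro h
  have := Ψ.pair_self η hη
  rw [h] at this
  simp at this

section Base

variable {Δ : Finset X}

lemma base_indep (hΔ : Ψ.IsBase Δ) (f : X → ℤ)
    (hf : ∑ a ∈ Δ, f a • a = 0) : ∀ a ∈ Δ, f a = 0 := by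
  classical
  obtain ⟨-, hli, -⟩ := hΔ
  rw [linearIndependent_iff'] at hli
  set e : {x // x ∈ Δ} ↪ ↥(↑Δ : Set X) :=
    ⟨fun a => ⟨a.1, Finset.mem_coe.2 a.2⟩,
     fun a b h => Subtype.ext (congrArg Subtype.val h)⟩ with he
  have hsum : ∑ i ∈ Δ.attach.map e, f (i : X) • (i : X) = 0 := by
    rw [Finset.sum_map]
    have : ∀ a : {x // x ∈ Δ}, f ((e a : ↥(↑Δ : Set X)) : X) • ((e a : ↥(↑Δ : Set X)) : X)
        = f (a : X) • (a : X) := fun a => rfl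
    rw [Finset.sum_congr rfl (fun a _ => this a)]
    rw [Finset.sum_attach Δ (fun a => f a • a)]
    exact hf
  intro a ha
  exact hli (Δ.attach.map e) (fun i => f (i : X)) hsum ⟨a, Finset.mem_coe.2 ha⟩
    (Finset.mem_map.2 ⟨⟨a, ha⟩, Finset.mem_attach _ _, rfl⟩)

lemma base_unique (hΔ : Ψ.IsBase Δ) (f g : X → ℤ)
    (h : ∑ a ∈ Δ, f a • a = ∑ a ∈ Δ, g a • a) : ∀ a ∈ Δ, f a = g a := by
  have hz : ∑ a ∈ Δ, (f a - g a) • a = 0 := by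
    rw [Finset.sum_congr rfl (fun a _ => sub_smul (f a) (g a) a), Finset.sum_sub_distrib, h,
      sub_self]
  intro a ha
  have h2 : f a - g a = 0 := base_indep Ψ hΔ (fun a => f a - g a) hz a ha
  omega

/-- A chosen coefficient function for each root w.r.t. the base. -/
noncomputable def rcoef (hΔ : Ψ.IsBase Δ) (η : X) : X → ℤ :=
  if h : η ∈ Ψ.roots then (hΔ.2.2 η h).choose else 0

lemma rcoef_spec (hΔ : Ψ.IsBase Δ) {η : X} (hη : η ∈ Ψ.roots) :
    η = ∑ a ∈ Δ, rcoef Ψ hΔ η a • a ∧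
      ((∀ a ∈ Δ, 0 ≤ rcoef Ψ hΔ η a) ∨ (∀ a ∈ Δ, rcoef Ψ hΔ η a ≤ 0)) := by
  rw [rcoef, dif_pos hη]
  exact (hΔ.2.2 η hη).choose_spec

/-- The height of a root. -/
noncomputable def hgt (hΔ : Ψ.IsBase Δ) (η : X) : ℤ := ∑ a ∈ Δ, rcoef Ψ hΔ η a

lemma coeff_zero_of_hgt_zero (hΔ : Ψ.IsBase Δ) {η : X} (hη : η ∈ Ψ.roots)
    (h0 : hgt Ψ hΔ η = 0) : η = 0 := by
  unfold hgt at h0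
  obtain ⟨hrep, hsg⟩ := rcoef_spec Ψ hΔ hη
  have hz : ∀ a ∈ Δ, rcoef Ψ hΔ η a = 0 := by
    rcases hsg with h | h
    · exact fun a ha => (Finset.sum_eq_zero_iff_of_nonneg h).1 h0 a ha
    · intro a ha
      have h' : ∀ a ∈ Δ, 0 ≤ -rcoef Ψ hΔ η a := fun a ha => by
        have := h a ha; omega
      have h0' : ∑ a ∈ Δ, -rcoef Ψ hΔ η a = 0 := by
        rw [Finset.sum_neg_distrib]
        omega
      have := (Finset.sum_eq_zero_iff_of_nonneg h').1 h0' a ha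
      omega
  rw [hrep]
  exact Finset.sum_eq_zero fun a ha => by rw [hz a ha, zero_smul]

lemma hgt_ne_zero (hΔ : Ψ.IsBase Δ) {η : X} (hη : η ∈ Ψ.roots) : hgt Ψ hΔ η ≠ 0 :=
  fun h0 => root_ne_zero Ψ hη (coeff_zero_of_hgt_zero Ψ hΔ hη h0)

end Base

section Orbit

variable [Fintype Γ] (ρ : Γ →* AddAut X) (ρ' : Γ →* AddAut Y)

lemma mem_orb {β θ : X} : θ ∈ orb ρ β ↔ ∃ γ : Γ, ρ γ β = θ := by
  simp [orb]

lemma self_mem_orb (β : X) : β ∈ orb ρ β :=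
  (mem_orb ρ).2 ⟨1, by rw [map_one]; rfl⟩

lemma orb_nonempty (β : X) : (orb ρ β).Nonempty := ⟨β, self_mem_orb ρ β⟩

lemma orb_subset_roots (hact : RDAction Ψ ρ ρ') {β : X} (hβ : β ∈ Ψ.roots) :
    ∀ θ ∈ orb ρ β, θ ∈ Ψ.roots := by
  intro θ hθ
  obtain ⟨γ, rfl⟩ := (mem_orb ρ).1 hθ
  exact hact.root_mem γ β hβ

lemma map_mem_orb {β θ : X} (γ : Γ) (hθ : θ ∈ orb ρ β) : ρ γ θ ∈ orb ρ β := by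
  obtain ⟨γ', rfl⟩ := (mem_orb ρ).1 hθ
  exact (mem_orb ρ).2 ⟨γ * γ', by rw [map_mul]; rfl⟩

lemma pair_equivariant (hact : RDAction Ψ ρ ρ') {x θ : X} (hθ : θ ∈ Ψ.roots) (γ : Γ) :
    Ψ.pair (ρ γ x) (Ψ.coroot (ρ γ θ)) = Ψ.pair x (Ψ.coroot θ) := by
  rw [hact.coroot_eq γ θ hθ, hact.pair_eq]

lemma BB_gamma (hact : RDAction Ψ ρ ρ') (γ : Γ) (x y : X) :
    BB Ψ (ρ γ x) (ρ γ y) = BB Ψ x y := by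
  classical
  have hmem : ∀ v ∈ CR Ψ, ρ' γ v ∈ CR Ψ := by
    intro v hv
    rcases Finset.mem_image.1 hv with ⟨b', hb', rfl⟩
    rw [← hact.coroot_eq γ b' hb']
    exact coroot_mem_CR Ψ (hact.root_mem γ b' hb')
  have hmem' : ∀ v ∈ CR Ψ, ρ' γ⁻¹ v ∈ CR Ψ := by
    intro v hv
    rcases Finset.mem_image.1 hv with ⟨b', hb', rfl⟩
    rw [← hact.coroot_eq γ⁻¹ b' hb']
    exact coroot_mem_CR Ψ (hact.root_mem γ⁻¹ b' hb')
  have hcancel : ∀ v : Y, ρ' γ (ρ' γ⁻¹ v) = v := fun v => by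
    rw [← addAut_mul_apply_old, ← map_mul, mul_inv_cancel, map_one]; rfl
  have hcancel' : ∀ v : Y, ρ' γ⁻¹ (ρ' γ v) = v := fun v => by
    rw [← addAut_mul_apply_old, ← map_mul, inv_mul_cancel, map_one]; rfl
  unfold BB
  rw [Finset.sum_nbij' (i := fun v => ρ' γ⁻¹ v) (j := fun v => ρ' γ v) (hi := hmem')
    (hj := hmem) (left_neg := fun v _ => hcancel v) (right_neg := fun v _ => hcancel' v)]
  intro v hv
  have e : ∀ z : X, Ψ.pair (ρ γ z) v = Ψ.pair z (ρ' γ⁻¹ v) := by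
    intro z
    conv_lhs => rw [← hcancel v]
    rw [hact.pair_eq]
  rw [e x, e y]

lemma BB_orb_eq (hact : RDAction Ψ ρ ρ') {β θ : X} (hθ : θ ∈ orb ρ β) :
    BB Ψ θ θ = BB Ψ β β := by
  obtain ⟨γ, rfl⟩ := (mem_orb ρ).1 hθ
  exact BB_gamma Ψ ρ ρ' hact γ β β

variable {Δ : Finset X}

lemma image_base (hstab : ∀ γ : Γ, ∀ a ∈ Δ, ρ γ a ∈ Δ) (γ : Γ) : Δ.image (ρ γ) = Δ := by
  apply Finset.eq_of_subset_of_card_le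
  · intro b hb
    rcases Finset.mem_image.1 hb with ⟨a, ha, rfl⟩
    exact hstab γ a ha
  · rw [Finset.card_image_of_injective Δ (ρ γ).injective]

lemma gamma_cancel (γ : Γ) (x : X) : ρ γ⁻¹ (ρ γ x) = x := by
  rw [← addAut_mul_apply_old, ← map_mul, inv_mul_cancel, map_one]; rfl

lemma hgt_gamma (hact : RDAction Ψ ρ ρ') (hΔ : Ψ.IsBase Δ)
    (hstab : ∀ γ : Γ, ∀ a ∈ Δ, ρ γ a ∈ Δ) {η : X} (hη : η ∈ Ψ.roots) (γ : Γ) :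
    hgt Ψ hΔ (ρ γ η) = hgt Ψ hΔ η := by
  classical
  have hγη : ρ γ η ∈ Ψ.roots := hact.root_mem γ η hη
  have hinj : Set.InjOn (ρ γ) Δ := fun a _ b _ h => (ρ γ).injective h
  have reindex : ∀ g : X → X → ℤ,
      ∑ a ∈ Δ, g (ρ γ⁻¹ a) a = ∑ a ∈ Δ, g a (ρ γ a) := by
    intro g
    conv_lhs => rw [← image_base ρ hstab γ]
    rw [Finset.sum_image (fun a ha b hb h => hinj ha hb h)]
    exact Finset.sum_congr rfl fun a _ => by rw [gamma_cancel]
  have reindexX : ∀ g : X → X → X,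
      ∑ a ∈ Δ, g (ρ γ⁻¹ a) a = ∑ a ∈ Δ, g a (ρ γ a) := by
    intro g
    conv_lhs => rw [← image_base ρ hstab γ]
    rw [Finset.sum_image (fun a ha b hb h => hinj ha hb h)]
    exact Finset.sum_congr rfl fun a _ => by rw [gamma_cancel]
  have hrep : ρ γ η = ∑ a ∈ Δ, rcoef Ψ hΔ η (ρ γ⁻¹ a) • a := by
    have e1 := (rcoef_spec Ψ hΔ hη).1
    have : ρ γ η = ∑ a ∈ Δ, rcoef Ψ hΔ η a • ρ γ a := by
      conv_lhs => rw [e1]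
      rw [map_sum]
      exact Finset.sum_congr rfl fun a _ => map_zsmul (ρ γ : X →+ X) _ _
    rw [this, ← reindexX (fun b a => rcoef Ψ hΔ η b • a)]
  have hcoef : ∀ a ∈ Δ, rcoef Ψ hΔ (ρ γ η) a = rcoef Ψ hΔ η (ρ γ⁻¹ a) :=
    base_unique Ψ hΔ _ _ ((rcoef_spec Ψ hΔ hγη).1.symm.trans hrep)
  unfold hgt
  rw [Finset.sum_congr rfl hcoef, reindex (fun b _ => rcoef Ψ hΔ η b)]

lemma hgt_orb (hact : RDAction Ψ ρ ρ') (hΔ : Ψ.IsBase Δ)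
    (hstab : ∀ γ : Γ, ∀ a ∈ Δ, ρ γ a ∈ Δ) {β θ : X} (hβ : β ∈ Ψ.roots)
    (hθ : θ ∈ orb ρ β) : hgt Ψ hΔ θ = hgt Ψ hΔ β := by
  obtain ⟨γ, rfl⟩ := (mem_orb ρ).1 hθ
  exact hgt_gamma Ψ ρ ρ' hact hΔ hstab hβ γ

lemma orb_comb (hact : RDAction Ψ ρ ρ') (hΔ : Ψ.IsBase Δ) {β : X} (hβ : β ∈ Ψ.roots)
    (e : X → ℤ) :
    ∑ θ ∈ orb ρ β, e θ • θ = ∑ a ∈ Δ, (∑ θ ∈ orb ρ β, e θ * rcoef Ψ hΔ θ a) • a := by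
  have key : ∀ (n : ℤ) (η : X), η ∈ Ψ.roots →
      n • η = ∑ a ∈ Δ, (n * rcoef Ψ hΔ η a) • a := by
    intro n η hη
    conv_lhs => rw [(rcoef_spec Ψ hΔ hη).1]
    rw [Finset.smul_sum]
    exact Finset.sum_congr rfl fun a _ => smul_smul n _ a
  rw [Finset.sum_congr rfl
    (fun θ hθ => key (e θ) θ (orb_subset_roots Ψ ρ ρ' hact hβ θ hθ)), Finset.sum_comm]
  exact Finset.sum_congr rfl fun a _ => (Finset.sum_smul).symm

lemma orbit_relation (hact : RDAction Ψ ρ ρ') (hΔ : Ψ.IsBase Δ)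
    (hstab : ∀ γ : Γ, ∀ a ∈ Δ, ρ γ a ∈ Δ) {β : X} (hβ : β ∈ Ψ.roots) (e : X → ℤ)
    (h : ∑ θ ∈ orb ρ β, e θ • θ = 0) : ∑ θ ∈ orb ρ β, e θ = 0 := by
  have hcomb := orb_comb Ψ ρ ρ' hact hΔ hβ e
  rw [h] at hcomb
  have hz := base_indep Ψ hΔ _ hcomb.symm
  have htot : (0 : ℤ) = ∑ θ ∈ orb ρ β, e θ * hgt Ψ hΔ θ := by
    calc (0 : ℤ) = ∑ a ∈ Δ, ∑ θ ∈ orb ρ β, e θ * rcoef Ψ hΔ θ a :=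
      (Finset.sum_eq_zero hz).symm
    _ = ∑ θ ∈ orb ρ β, ∑ a ∈ Δ, e θ * rcoef Ψ hΔ θ a := Finset.sum_comm
    _ = ∑ θ ∈ orb ρ β, e θ * hgt Ψ hΔ θ :=
      Finset.sum_congr rfl fun θ _ => by rw [hgt, Finset.mul_sum]
  rw [Finset.sum_congr rfl (fun θ hθ => by
    rw [hgt_orb Ψ ρ ρ' hact hΔ hstab hβ hθ]), ← Finset.sum_mul] at htot
  have hne := hgt_ne_zero Ψ hΔ hβ
  rcases mul_eq_zero.1 htot.symm with h' | h'
  · exact h'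
  · exact absurd h' hne

lemma orbit_not_root (hact : RDAction Ψ ρ ρ') (hΔ : Ψ.IsBase Δ)
    (hstab : ∀ γ : Γ, ∀ a ∈ Δ, ρ γ a ∈ Δ) {β : X} (hβ : β ∈ Ψ.roots) (e : X → ℤ)
    (he : ∑ θ ∈ orb ρ β, e θ = 0) {η : X} (hη : η ∈ Ψ.roots)
    (hrep : η = ∑ θ ∈ orb ρ β, e θ • θ) : False := by
  have hcomb := orb_comb Ψ ρ ρ' hact hΔ hβ e
  rw [← hrep] at hcomb
  have hu := base_unique Ψ hΔ _ _ ((rcoef_spec Ψ hΔ hη).1.symm.trans hcomb)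
  have htot : hgt Ψ hΔ η = ∑ θ ∈ orb ρ β, e θ * hgt Ψ hΔ θ := by
    calc hgt Ψ hΔ η = ∑ a ∈ Δ, ∑ θ ∈ orb ρ β, e θ * rcoef Ψ hΔ θ a :=
      Finset.sum_congr rfl hu
    _ = ∑ θ ∈ orb ρ β, ∑ a ∈ Δ, e θ * rcoef Ψ hΔ θ a := Finset.sum_comm
    _ = ∑ θ ∈ orb ρ β, e θ * hgt Ψ hΔ θ :=
      Finset.sum_congr rfl fun θ _ => by rw [hgt, Finset.mul_sum]
  rw [Finset.sum_congr rfl (fun θ hθ => by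
    rw [hgt_orb Ψ ρ ρ' hact hΔ hstab hβ hθ]), ← Finset.sum_mul, he, zero_mul] at htot
  exact root_ne_zero Ψ hη (coeff_zero_of_hgt_zero Ψ hΔ hη htot)


lemma orb_subset_sum_ne_zero (hact : RDAction Ψ ρ ρ') (hΔ : Ψ.IsBase Δ)
    (hstab : ∀ γ : Γ, ∀ a ∈ Δ, ρ γ a ∈ Δ) {β : X} (hβ : β ∈ Ψ.roots) {S : Finset X}
    (hS : S ⊆ orb ρ β) (hSne : S.Nonempty) : ∑ x ∈ S, x ≠ 0 := by
  classical
  intro h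
  have hrel := orbit_relation Ψ ρ ρ' hact hΔ hstab hβ
    (fun x => if x ∈ S then 1 else 0) ?_
  · rw [Finset.sum_ite_mem, Finset.inter_eq_right.2 hS] at hrel
    simp only [Finset.sum_const, nsmul_eq_mul, mul_one] at hrel
    have := Finset.card_ne_zero_of_mem (Finset.mem_coe.1 (hSne.choose_spec))
    omega
  · simp only [ite_smul, one_smul, zero_smul]
    rw [Finset.sum_ite_mem, Finset.inter_eq_right.2 hS]
    exact h

lemma orb_add_ne_zero (hact : RDAction Ψ ρ ρ') (hΔ : Ψ.IsBase Δ)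
    (hstab : ∀ γ : Γ, ∀ a ∈ Δ, ρ γ a ∈ Δ) {β θ θ' : X} (hβ : β ∈ Ψ.roots)
    (hθ : θ ∈ orb ρ β) (hθ' : θ' ∈ orb ρ β) : θ + θ' ≠ 0 := by
  intro h
  have hθr := orb_subset_roots Ψ ρ ρ' hact hβ θ hθ
  have hθ'r := orb_subset_roots Ψ ρ ρ' hact hβ θ' hθ'
  have hrep : θ' = ∑ a ∈ Δ, (-(rcoef Ψ hΔ θ a)) • a := by
    have : θ' = -θ := by linear_combination (norm := abel) h
    rw [this]
    conv_lhs => rw [(rcoef_spec Ψ hΔ hθr).1]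
    rw [← Finset.sum_neg_distrib]
    exact Finset.sum_congr rfl fun a _ => (neg_smul _ _).symm
  have hu := base_unique Ψ hΔ _ _ (((rcoef_spec Ψ hΔ hθ'r).1).symm.trans hrep)
  have hh : hgt Ψ hΔ θ' = - hgt Ψ hΔ θ := by
    unfold hgt
    rw [Finset.sum_congr rfl hu, Finset.sum_neg_distrib]
  rw [hgt_orb Ψ ρ ρ' hact hΔ hstab hβ hθ, hgt_orb Ψ ρ ρ' hact hΔ hstab hβ hθ'] at hh
  have := hgt_ne_zero Ψ hΔ hβ
  omega

lemma orb_sub_not_root (hact : RDAction Ψ ρ ρ') (hΔ : Ψ.IsBase Δ)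
    (hstab : ∀ γ : Γ, ∀ a ∈ Δ, ρ γ a ∈ Δ) {β θ θ' : X} (hβ : β ∈ Ψ.roots)
    (hθ : θ ∈ orb ρ β) (hθ' : θ' ∈ orb ρ β) (hne : θ ≠ θ') : θ - θ' ∉ Ψ.roots := by
  intro hroot
  have hθr := orb_subset_roots Ψ ρ ρ' hact hβ θ hθ
  have hθ'r := orb_subset_roots Ψ ρ ρ' hact hβ θ' hθ'
  have hrep : θ - θ' = ∑ a ∈ Δ, (rcoef Ψ hΔ θ a - rcoef Ψ hΔ θ' a) • a := by
    conv_lhs => rw [(rcoef_spec Ψ hΔ hθr).1, (rcoef_spec Ψ hΔ hθ'r).1]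
    rw [← Finset.sum_sub_distrib]
    exact Finset.sum_congr rfl fun a _ => (sub_smul _ _ _).symm
  have hu := base_unique Ψ hΔ _ _ (((rcoef_spec Ψ hΔ hroot).1).symm.trans hrep)
  have hh : hgt Ψ hΔ (θ - θ') = hgt Ψ hΔ θ - hgt Ψ hΔ θ' := by
    unfold hgt
    rw [Finset.sum_congr rfl hu, Finset.sum_sub_distrib]
  rw [hgt_orb Ψ ρ ρ' hact hΔ hstab hβ hθ, hgt_orb Ψ ρ ρ' hact hΔ hstab hβ hθ',
    sub_self] at hh
  have h0 := coeff_zero_of_hgt_zero Ψ hΔ hroot hh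
  rw [sub_eq_zero] at h0
  exact hne h0

/-- Distinct elements of an orbit pair to `0` or `-1`. -/
lemma orb_pair_mem (hact : RDAction Ψ ρ ρ') (hΔ : Ψ.IsBase Δ)
    (hstab : ∀ γ : Γ, ∀ a ∈ Δ, ρ γ a ∈ Δ) {β θ θ' : X} (hβ : β ∈ Ψ.roots)
    (hθ : θ ∈ orb ρ β) (hθ' : θ' ∈ orb ρ β) (hne : θ ≠ θ') :
    Ψ.pair θ (Ψ.coroot θ') = 0 ∨ Ψ.pair θ (Ψ.coroot θ') = -1 := by
  have hθr := orb_subset_roots Ψ ρ ρ' hact hβ θ hθ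
  have hθ'r := orb_subset_roots Ψ ρ ρ' hact hβ θ' hθ'
  have hnorm : BB Ψ θ θ = BB Ψ θ' θ' := by
    rw [BB_orb_eq Ψ ρ ρ' hact hθ, BB_orb_eq Ψ ρ ρ' hact hθ']
  have hsymm := pair_symm_of_norm_eq Ψ hθr hθ'r hnorm
  have hsq := pair_sq_le_four Ψ hθr hθ'r hnorm
  set k := Ψ.pair θ (Ψ.coroot θ') with hk
  have hbound : -2 ≤ k ∧ k ≤ 2 := by constructor <;> nlinarith
  have hk2 : k ≠ 2 := by
    intro h2
    exact no_double_bond Ψ hθr hθ'r 1 (Or.inl rfl)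
      (by omega) (by omega)
      (by rw [one_smul]; exact sub_ne_zero.2 hne)
  have hkm2 : k ≠ -2 := by
    intro h2
    refine no_double_bond Ψ hθr hθ'r (-1) (Or.inr rfl)
      (by omega) (by omega) ?_
    have : θ - (-1 : ℤ) • θ' = θ + θ' := by rw [neg_smul, one_smul, sub_neg_eq_add]
    rw [this]
    exact orb_add_ne_zero Ψ ρ ρ' hact hΔ hstab hβ hθ hθ'
  have hk1 : k ≠ 1 := by
    intro h1
    have := Ψ.reflect_mem θ' hθ'r θ hθr
    rw [← hk, h1, one_smul] at this
    exact orb_sub_not_root Ψ ρ ρ' hact hΔ hstab hβ hθ hθ' hne this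
  omega

lemma orb_trans {β θ θ' : X} (hθ : θ ∈ orb ρ β) (hθ' : θ' ∈ orb ρ β) :
    ∃ γ : Γ, ρ γ θ' = θ := by
  obtain ⟨γ₁, rfl⟩ := (mem_orb ρ).1 hθ
  obtain ⟨γ₀, rfl⟩ := (mem_orb ρ).1 hθ'
  exact ⟨γ₁ * γ₀⁻¹, by rw [map_mul, addAut_mul_apply_old, gamma_cancel ρ γ₀ β]⟩

lemma exists_partner (hact : RDAction Ψ ρ ρ') {β : X} (hβ : β ∈ Ψ.roots)
    (hno : ¬ IsOrthogonalSet Ψ (orb ρ β)) {θ : X} (hθ : θ ∈ orb ρ β) :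
    ∃ θ', θ' ∈ orb ρ β ∧ θ' ≠ θ ∧ Ψ.pair θ (Ψ.coroot θ') ≠ 0 := by
  rw [IsOrthogonalSet] at hno
  push_neg at hno
  obtain ⟨θ₀, hθ₀, θ₀', hθ₀', hne₀, hp₀⟩ := hno
  obtain ⟨γ, hγ⟩ := orb_trans ρ hθ hθ₀
  refine ⟨ρ γ θ₀', map_mem_orb ρ γ hθ₀', ?_, ?_⟩
  · intro h
    rw [← hγ] at h
    exact hne₀ (((ρ γ).injective h).symm)
  · rw [← hγ, pair_equivariant Ψ ρ ρ' hact (orb_subset_roots Ψ ρ ρ' hact hβ θ₀' hθ₀') γ]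
    exact hp₀


lemma partner_unique' (hact : RDAction Ψ ρ ρ') (hΔ : Ψ.IsBase Δ)
    (hstab : ∀ γ : Γ, ∀ a ∈ Δ, ρ γ a ∈ Δ) {β : X} (hβ : β ∈ Ψ.roots)
    {θ θ₁ θ₂ : X} (hθ : θ ∈ orb ρ β) (hθ₁ : θ₁ ∈ orb ρ β) (hθ₂ : θ₂ ∈ orb ρ β)
    (h1ne : θ₁ ≠ θ) (h2ne : θ₂ ≠ θ) (h12 : θ₁ ≠ θ₂)
    (p1 : Ψ.pair θ (Ψ.coroot θ₁) = -1) (p2 : Ψ.pair θ (Ψ.coroot θ₂) = -1) : False := by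
  apply no_two_regular Ψ (BB Ψ β β) (orb ρ β).card (orb ρ β) le_rfl (orb_nonempty ρ β)
    (orb_subset_roots Ψ ρ ρ' hact hβ)
    (fun w hw => BB_orb_eq Ψ ρ ρ' hact hw)
    (fun x hx y hy hxy => orb_pair_mem Ψ ρ ρ' hact hΔ hstab hβ hx hy hxy)
    ?_ (fun S hS hSne => orb_subset_sum_ne_zero Ψ ρ ρ' hact hΔ hstab hβ hS hSne)
  intro w hw
  obtain ⟨γ, hγ⟩ := orb_trans ρ hw hθ
  refine ⟨ρ γ θ₁, map_mem_orb ρ γ hθ₁, ρ γ θ₂, map_mem_orb ρ γ hθ₂,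
    fun h => h12 ((ρ γ).injective h), ?_, ?_, ?_, ?_⟩
  · rw [← hγ]; exact fun h => h1ne ((ρ γ).injective h)
  · rw [← hγ]; exact fun h => h2ne ((ρ γ).injective h)
  · rw [← hγ,
      pair_equivariant Ψ ρ ρ' hact (orb_subset_roots Ψ ρ ρ' hact hβ θ₁ hθ₁) γ]
    exact p1
  · rw [← hγ,
      pair_equivariant Ψ ρ ρ' hact (orb_subset_roots Ψ ρ ρ' hact hβ θ₂ hθ₂) γ]
    exact p2

lemma partner_mem_props (hact : RDAction Ψ ρ ρ') (hΔ : Ψ.IsBase Δ)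
    (hstab : ∀ γ : Γ, ∀ a ∈ Δ, ρ γ a ∈ Δ) {β : X} (hβ : β ∈ Ψ.roots)
    (hno : ¬ IsOrthogonalSet Ψ (orb ρ β)) {θ : X} (hθ : θ ∈ orb ρ β) :
    partner Ψ ρ β θ ∈ orb ρ β ∧ partner Ψ ρ β θ ≠ θ ∧
      Ψ.pair θ (Ψ.coroot (partner Ψ ρ β θ)) = -1 := by
  have hex := exists_partner Ψ ρ ρ' hact hβ hno hθ
  have hP : partner Ψ ρ β θ = hex.choose := by rw [partner, dif_pos hex]
  obtain ⟨h1, h2, h3⟩ := hex.choose_spec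
  rw [← hP] at h1 h2 h3
  refine ⟨h1, h2, ?_⟩
  rcases orb_pair_mem Ψ ρ ρ' hact hΔ hstab hβ hθ h1 (Ne.symm h2) with h | h
  · exact absurd h h3
  · exact h

lemma partner_eq (hact : RDAction Ψ ρ ρ') (hΔ : Ψ.IsBase Δ)
    (hstab : ∀ γ : Γ, ∀ a ∈ Δ, ρ γ a ∈ Δ) {β : X} (hβ : β ∈ Ψ.roots)
    (hno : ¬ IsOrthogonalSet Ψ (orb ρ β)) {θ θ' : X} (hθ : θ ∈ orb ρ β)
    (hθ' : θ' ∈ orb ρ β) (hne : θ' ≠ θ) (hp : Ψ.pair θ (Ψ.coroot θ') ≠ 0) :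
    θ' = partner Ψ ρ β θ := by
  obtain ⟨hpm, hpne, hppair⟩ := partner_mem_props Ψ ρ ρ' hact hΔ hstab hβ hno hθ
  by_contra hne2
  have p1 : Ψ.pair θ (Ψ.coroot θ') = -1 := by
    rcases orb_pair_mem Ψ ρ ρ' hact hΔ hstab hβ hθ hθ' (Ne.symm hne) with h | h
    · exact absurd h hp
    · exact h
  exact partner_unique' Ψ ρ ρ' hact hΔ hstab hβ hθ hθ' hpm hne hpne hne2 p1 hppair

lemma partner_pair_symm (hact : RDAction Ψ ρ ρ') (hΔ : Ψ.IsBase Δ)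
    (hstab : ∀ γ : Γ, ∀ a ∈ Δ, ρ γ a ∈ Δ) {β : X} (hβ : β ∈ Ψ.roots)
    (hno : ¬ IsOrthogonalSet Ψ (orb ρ β)) {θ : X} (hθ : θ ∈ orb ρ β) :
    Ψ.pair (partner Ψ ρ β θ) (Ψ.coroot θ) = -1 := by
  obtain ⟨hpm, hpne, hppair⟩ := partner_mem_props Ψ ρ ρ' hact hΔ hstab hβ hno hθ
  rw [← pair_symm_of_norm_eq Ψ (orb_subset_roots Ψ ρ ρ' hact hβ θ hθ)
    (orb_subset_roots Ψ ρ ρ' hact hβ _ hpm)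
    (by rw [BB_orb_eq Ψ ρ ρ' hact hθ, BB_orb_eq Ψ ρ ρ' hact hpm])]
  exact hppair

lemma partner_invol (hact : RDAction Ψ ρ ρ') (hΔ : Ψ.IsBase Δ)
    (hstab : ∀ γ : Γ, ∀ a ∈ Δ, ρ γ a ∈ Δ) {β : X} (hβ : β ∈ Ψ.roots)
    (hno : ¬ IsOrthogonalSet Ψ (orb ρ β)) {θ : X} (hθ : θ ∈ orb ρ β) :
    partner Ψ ρ β (partner Ψ ρ β θ) = θ := by
  obtain ⟨hpm, hpne, hppair⟩ := partner_mem_props Ψ ρ ρ' hact hΔ hstab hβ hno hθ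
  have hsymm := partner_pair_symm Ψ ρ ρ' hact hΔ hstab hβ hno hθ
  exact (partner_eq Ψ ρ ρ' hact hΔ hstab hβ hno hpm hθ (Ne.symm hpne)
    (by rw [hsymm]; norm_num)).symm

lemma partner_equivariant (hact : RDAction Ψ ρ ρ') (hΔ : Ψ.IsBase Δ)
    (hstab : ∀ γ : Γ, ∀ a ∈ Δ, ρ γ a ∈ Δ) {β : X} (hβ : β ∈ Ψ.roots)
    (hno : ¬ IsOrthogonalSet Ψ (orb ρ β)) {θ : X} (hθ : θ ∈ orb ρ β) (γ : Γ) :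
    partner Ψ ρ β (ρ γ θ) = ρ γ (partner Ψ ρ β θ) := by
  obtain ⟨hpm, hpne, hppair⟩ := partner_mem_props Ψ ρ ρ' hact hΔ hstab hβ hno hθ
  refine (partner_eq Ψ ρ ρ' hact hΔ hstab hβ hno (map_mem_orb ρ γ hθ)
    (map_mem_orb ρ γ hpm) (fun h => hpne ((ρ γ).injective h)) ?_).symm
  rw [pair_equivariant Ψ ρ ρ' hact (orb_subset_roots Ψ ρ ρ' hact hβ _ hpm) γ, hppair]
  norm_num

lemma partner_sum_root (hact : RDAction Ψ ρ ρ') (hΔ : Ψ.IsBase Δ)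
    (hstab : ∀ γ : Γ, ∀ a ∈ Δ, ρ γ a ∈ Δ) {β : X} (hβ : β ∈ Ψ.roots)
    (hno : ¬ IsOrthogonalSet Ψ (orb ρ β)) {θ : X} (hθ : θ ∈ orb ρ β) :
    θ + partner Ψ ρ β θ ∈ Ψ.roots := by
  obtain ⟨hpm, hpne, hppair⟩ := partner_mem_props Ψ ρ ρ' hact hΔ hstab hβ hno hθ
  have := Ψ.reflect_mem (partner Ψ ρ β θ) (orb_subset_roots Ψ ρ ρ' hact hβ _ hpm) θ
    (orb_subset_roots Ψ ρ ρ' hact hβ θ hθ)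
  rw [hppair] at this
  simpa [sub_neg_eq_add] using this

lemma partner_coroot_add (hact : RDAction Ψ ρ ρ') (hΔ : Ψ.IsBase Δ)
    (hstab : ∀ γ : Γ, ∀ a ∈ Δ, ρ γ a ∈ Δ) {β : X} (hβ : β ∈ Ψ.roots)
    (hno : ¬ IsOrthogonalSet Ψ (orb ρ β)) {θ : X} (hθ : θ ∈ orb ρ β) :
    Ψ.coroot (θ + partner Ψ ρ β θ) = Ψ.coroot θ + Ψ.coroot (partner Ψ ρ β θ) := by
  obtain ⟨hpm, hpne, hppair⟩ := partner_mem_props Ψ ρ ρ' hact hΔ hstab hβ hno hθ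
  set p := partner Ψ ρ β θ with hp
  have hθr := orb_subset_roots Ψ ρ ρ' hact hβ θ hθ
  have hpr := orb_subset_roots Ψ ρ ρ' hact hβ p hpm
  have hξr := partner_sum_root Ψ ρ ρ' hact hΔ hstab hβ hno hθ
  rw [← hp] at hξr
  have hbθ : BB Ψ θ θ = BB Ψ β β := BB_orb_eq Ψ ρ ρ' hact hθ
  have hbp : BB Ψ p p = BB Ψ β β := BB_orb_eq Ψ ρ ρ' hact hpm
  have hbb : 2 * BB Ψ θ p = - BB Ψ β β := by
    have := BB_pairing Ψ hpr θ
    rw [hppair, hbp] at this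
    linarith
  have hξnorm : BB Ψ (θ + p) (θ + p) = BB Ψ β β := by
    rw [BB_add_left, BB_add_right, BB_add_right]
    have hc : BB Ψ p θ = BB Ψ θ p := BB_comm Ψ p θ
    linarith
  have hpos : 0 < BB Ψ β β := by rw [← hbθ]; exact BB_pos Ψ hθr
  have key : ∀ x : X, Ψ.pair x (Ψ.coroot (θ + p)) = Ψ.pair x (Ψ.coroot θ + Ψ.coroot p) := by
    intro x
    have h1 := BB_pairing Ψ hξr x
    rw [hξnorm] at h1
    have h2 := BB_pairing Ψ hθr x
    rw [hbθ] at h2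
    have h3 := BB_pairing Ψ hpr x
    rw [hbp] at h3
    have hx : BB Ψ x (θ + p) = BB Ψ x θ + BB Ψ x p := BB_add_right Ψ x θ p
    have hmul : Ψ.pair x (Ψ.coroot (θ + p)) * BB Ψ β β =
        (Ψ.pair x (Ψ.coroot θ) + Ψ.pair x (Ψ.coroot p)) * BB Ψ β β := by
      linear_combination (-1 : ℤ) * h1 + h2 + h3 + 2 * hx
    have := mul_right_cancel₀ (ne_of_gt hpos) hmul
    rw [this, map_add]
  have hEq : Ψ.pair.flip (Ψ.coroot (θ + p)) = Ψ.pair.flip (Ψ.coroot θ + Ψ.coroot p) :=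
    AddMonoidHom.ext fun x => key x
  exact Ψ.perfect'.1 hEq


lemma orb_image (γ : Γ) (β : X) : (orb ρ β).image (ρ γ) = orb ρ β := by
  apply Finset.eq_of_subset_of_card_le
  · intro w hw
    rcases Finset.mem_image.1 hw with ⟨θ, hθ, rfl⟩
    exact map_mem_orb ρ γ hθ
  · rw [Finset.card_image_of_injective _ (ρ γ).injective]

lemma Xi_image (hact : RDAction Ψ ρ ρ') (hΔ : Ψ.IsBase Δ)
    (hstab : ∀ γ : Γ, ∀ a ∈ Δ, ρ γ a ∈ Δ) {β : X} (hβ : β ∈ Ψ.roots)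
    (hno : ¬ IsOrthogonalSet Ψ (orb ρ β)) (γ : Γ) :
    (Xi Ψ ρ β).image (ρ γ) = Xi Ψ ρ β := by
  have hXi : Xi Ψ ρ β = (orb ρ β).image (fun θ => θ + partner Ψ ρ β θ) := by
    rw [Xi, if_neg hno]
  apply Finset.eq_of_subset_of_card_le
  · intro w hw
    rcases Finset.mem_image.1 hw with ⟨ξ, hξ, rfl⟩
    rw [hXi] at hξ ⊢
    rcases Finset.mem_image.1 hξ with ⟨θ, hθ, rfl⟩
    refine Finset.mem_image.2 ⟨ρ γ θ, map_mem_orb ρ γ hθ, ?_⟩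
    show ρ γ θ + partner Ψ ρ β (ρ γ θ) = ρ γ (θ + partner Ψ ρ β θ)
    rw [partner_equivariant Ψ ρ ρ' hact hΔ hstab hβ hno hθ γ, map_add]
  · rw [Finset.card_image_of_injective _ (ρ γ).injective]

end Orbit
end RCAux

/-- For `β ∈ Φ` and `α = i*(β)`, the restricted coroot
`α^∨ = (|Γ·β|/|Ξ_β|) ∑_{ξ∈Ξ_β} ξ^∨` lies in `X̄_* = (X_*)^Γ`, and
`⟨ι(α), i_*(α^∨)⟩ = 2`, where `ι` is the averaging section
`ι(i*β) = (1/|Γ|) ∑_{γ∈Γ} γ·β` and `i_*` the inclusion of `(X_*)^Γ` in `X_*`. -/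
theorem restCoroot_invariant_and_pairing_two
    [Fintype Γ] [Module.Free ℤ X] [Module.Finite ℤ X]
    (Ψ : ZRootDatum X Y) (ρ : Γ →* AddAut X) (ρ' : Γ →* AddAut Y)
    (hact : RDAction Ψ ρ ρ') (Δ : Finset X) (hΔ : Ψ.IsBase Δ)
    (hstab : ∀ γ : Γ, ∀ a ∈ Δ, ρ γ a ∈ Δ)
    (β : X) (hβ : β ∈ Ψ.roots) :
    (∀ γ : Γ, ρ' γ (restCoroot Ψ ρ β) = restCoroot Ψ ρ β) ∧
    (1 / (Fintype.card Γ : ℚ)) *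
      (∑ γ : Γ, (Ψ.pair (ρ γ β) (restCoroot Ψ ρ β) : ℚ)) = 2 := by
  classical
  have hβO := RCAux.self_mem_orb ρ β
  have hXiroots : ∀ ξ ∈ Xi Ψ ρ β, ξ ∈ Ψ.roots := by
    by_cases hno : IsOrthogonalSet Ψ (orb ρ β)
    · rw [Xi, if_pos hno]
      exact RCAux.orb_subset_roots Ψ ρ ρ' hact hβ
    · rw [Xi, if_neg hno]
      intro ξ hξ
      rcases Finset.mem_image.1 hξ with ⟨θ, hθ, rfl⟩
      exact RCAux.partner_sum_root Ψ ρ ρ' hact hΔ hstab hβ hno hθ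
  have hXiim : ∀ γ : Γ, (Xi Ψ ρ β).image (ρ γ) = Xi Ψ ρ β := by
    intro γ
    by_cases hno : IsOrthogonalSet Ψ (orb ρ β)
    · rw [Xi, if_pos hno]
      exact RCAux.orb_image ρ γ β
    · exact RCAux.Xi_image Ψ ρ ρ' hact hΔ hstab hβ hno γ
  have g1 : ∀ γ : Γ, ρ' γ (restCoroot Ψ ρ β) = restCoroot Ψ ρ β := by
    intro γ
    rw [restCoroot, map_zsmul]
    congr 1
    rw [map_sum, Finset.sum_congr rfl
      (fun ξ hξ => (hact.coroot_eq γ ξ (hXiroots ξ hξ)).symm)]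
    conv_rhs => rw [← hXiim γ]
    rw [Finset.sum_image (fun a _ b _ h => (ρ γ).injective h)]
  have hval : Ψ.pair β (restCoroot Ψ ρ β) = 2 := by
    by_cases hno : IsOrthogonalSet Ψ (orb ρ β)
    · have hXi : Xi Ψ ρ β = orb ρ β := by rw [Xi, if_pos hno]
      rw [restCoroot, hXi, Nat.div_self (Finset.card_pos.2 (RCAux.orb_nonempty ρ β)),
        map_zsmul, map_sum,
        Finset.sum_eq_single_of_mem β hβO
          (fun ξ hξ hne => hno β hβO ξ hξ (Ne.symm hne)),
        Ψ.pair_self β hβ]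
      simp
    · have hXi : Xi Ψ ρ β = (orb ρ β).image (fun θ => θ + partner Ψ ρ β θ) := by
        rw [Xi, if_neg hno]
      -- peripheral orbit elements pair to zero with β
      have hbval : ∀ θ ∈ orb ρ β, θ ≠ β → partner Ψ ρ β θ ≠ β →
          Ψ.pair β (Ψ.coroot θ) = 0 := by
        intro θ hθ hne hpne
        rcases RCAux.orb_pair_mem Ψ ρ ρ' hact hΔ hstab hβ hβO hθ (Ne.symm hne)
          with h | h
        · exact h
        · exfalso
          have hpe := RCAux.partner_eq Ψ ρ ρ' hact hΔ hstab hβ hno hβO hθ hne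
            (by rw [h]; norm_num)
          apply hpne
          rw [hpe]
          exact RCAux.partner_invol Ψ ρ ρ' hact hΔ hstab hβ hno hβO
      have hppβ := RCAux.partner_mem_props Ψ ρ ρ' hact hΔ hstab hβ hno hβO
      -- fibers of the summation map all have two elements
      have hfib : ∀ ξ ∈ Xi Ψ ρ β,
          ((orb ρ β).filter (fun θ => θ + partner Ψ ρ β θ = ξ)).card = 2 := by
        intro ξ hξ
        rw [hXi] at hξ
        rcases Finset.mem_image.1 hξ with ⟨θ₀, hθ₀, rfl⟩
        obtain ⟨hpm₀, hpne₀, hpp₀⟩ :=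
          RCAux.partner_mem_props Ψ ρ ρ' hact hΔ hstab hβ hno hθ₀
        have hps₀ := RCAux.partner_pair_symm Ψ ρ ρ' hact hΔ hstab hβ hno hθ₀
        have hset : (orb ρ β).filter
              (fun θ => θ + partner Ψ ρ β θ = θ₀ + partner Ψ ρ β θ₀)
            = {θ₀, partner Ψ ρ β θ₀} := by
          ext η
          simp only [Finset.mem_filter, Finset.mem_insert, Finset.mem_singleton]
          constructor
          · rintro ⟨hη, hsum⟩
            by_contra hcon
            push_neg at hcon
            obtain ⟨hc1, hc2⟩ := hcon
            obtain ⟨hpmη, hpneη, hppη⟩ :=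
              RCAux.partner_mem_props Ψ ρ ρ' hact hΔ hstab hβ hno hη
            have hpηθ₀ : partner Ψ ρ β η ≠ θ₀ := by
              intro h
              apply hc2
              have hiv := RCAux.partner_invol Ψ ρ ρ' hact hΔ hstab hβ hno hη
              rw [← hiv, h]
            have e1 : Ψ.pair (η + partner Ψ ρ β η) (Ψ.coroot θ₀) =
                Ψ.pair (θ₀ + partner Ψ ρ β θ₀) (Ψ.coroot θ₀) := by rw [hsum]
            rw [map_add, AddMonoidHom.add_apply, map_add, AddMonoidHom.add_apply,
              Ψ.pair_self θ₀ (RCAux.orb_subset_roots Ψ ρ ρ' hact hβ θ₀ hθ₀), hps₀] at e1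
            have q1 := RCAux.orb_pair_mem Ψ ρ ρ' hact hΔ hstab hβ hη hθ₀ hc1
            have q2 := RCAux.orb_pair_mem Ψ ρ ρ' hact hΔ hstab hβ hpmη hθ₀ hpηθ₀
            omega
          · rintro (rfl | rfl)
            · exact ⟨hθ₀, rfl⟩
            · refine ⟨hpm₀, ?_⟩
              rw [RCAux.partner_invol Ψ ρ ρ' hact hΔ hstab hβ hno hθ₀, add_comm]
        rw [hset, Finset.card_insert_of_notMem
          (fun h => hpne₀ (Finset.mem_singleton.1 h).symm), Finset.card_singleton]
      have hXine : (Xi Ψ ρ β).Nonempty := by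
        rw [hXi]
        exact ⟨β + partner Ψ ρ β β, Finset.mem_image_of_mem _ hβO⟩
      have hcard2 : (orb ρ β).card = 2 * (Xi Ψ ρ β).card := by
        have hmapsto : ∀ θ ∈ orb ρ β, θ + partner Ψ ρ β θ ∈ Xi Ψ ρ β := by
          intro θ hθ
          rw [hXi]
          exact Finset.mem_image_of_mem _ hθ
        rw [Finset.card_eq_sum_card_fiberwise hmapsto, Finset.sum_congr rfl hfib,
          Finset.sum_const, smul_eq_mul, mul_comm]
      have hdiv : (orb ρ β).card / (Xi Ψ ρ β).card = 2 := by
        rw [hcard2, Nat.mul_div_cancel _ (Finset.card_pos.2 hXine)]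
      have hξ₀ : β + partner Ψ ρ β β ∈ Xi Ψ ρ β := by
        rw [hXi]
        exact Finset.mem_image_of_mem _ hβO
      have hsum1 : ∑ ξ ∈ Xi Ψ ρ β, Ψ.pair β (Ψ.coroot ξ) = 1 := by
        have hmain : ∑ ξ ∈ Xi Ψ ρ β, Ψ.pair β (Ψ.coroot ξ)
            = Ψ.pair β (Ψ.coroot (β + partner Ψ ρ β β)) := by
          refine Finset.sum_eq_single_of_mem _ hξ₀ ?_
          intro ξ hξm hξne
          rw [hXi] at hξm
          rcases Finset.mem_image.1 hξm with ⟨θ, hθ, rfl⟩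
          obtain ⟨hpmθ, hpneθ, hppθ⟩ :=
            RCAux.partner_mem_props Ψ ρ ρ' hact hΔ hstab hβ hno hθ
          have hβθ : θ ≠ β := by rintro rfl; exact hξne rfl
          have hβpθ : partner Ψ ρ β θ ≠ β := by
            intro h
            apply hξne
            have hθpβ : θ = partner Ψ ρ β β := by
              rw [← RCAux.partner_invol Ψ ρ ρ' hact hΔ hstab hβ hno hθ, h]
            rw [hθpβ, RCAux.partner_invol Ψ ρ ρ' hact hΔ hstab hβ hno hβO]
            exact add_comm _ _
          have hppne : partner Ψ ρ β (partner Ψ ρ β θ) ≠ β := by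
            rw [RCAux.partner_invol Ψ ρ ρ' hact hΔ hstab hβ hno hθ]
            exact hβθ
          rw [RCAux.partner_coroot_add Ψ ρ ρ' hact hΔ hstab hβ hno hθ, map_add,
            hbval θ hθ hβθ hβpθ, hbval _ hpmθ hβpθ hppne]
          norm_num
        rw [hmain, RCAux.partner_coroot_add Ψ ρ ρ' hact hΔ hstab hβ hno hβO, map_add,
          Ψ.pair_self β hβ, hppβ.2.2]
        norm_num
      rw [restCoroot, hdiv, map_zsmul, map_sum, hsum1]
      norm_num
  have hterm : ∀ γ : Γ, Ψ.pair (ρ γ β) (restCoroot Ψ ρ β) = 2 := by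
    intro γ
    conv_lhs => rw [← g1 γ]
    rw [hact.pair_eq γ β (restCoroot Ψ ρ β)]
    exact hval
  refine ⟨g1, ?_⟩
  have hQ : ∀ γ : Γ, ((Ψ.pair (ρ γ β) (restCoroot Ψ ρ β) : ℤ) : ℚ) = 2 := by
    intro γ
    rw [hterm γ]
    norm_num
  rw [Finset.sum_congr rfl (fun γ _ => hQ γ), Finset.sum_const, Finset.card_univ,
    nsmul_eq_mul]
  have hN : (Fintype.card Γ : ℚ) ≠ 0 := by
    exact_mod_cast (Fintype.card_pos (α := Γ)).ne'
  field_simp
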